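/- Let A be a d×d real positive semidefinite matrix, let B ⊆ ℝ^d be a closed convex set, and define g(u, v) = (u − v)ᵀ A (u − v) for u, v ∈ ℝ^d. Let x̂ ∈ ℝ^d and let x* ∈ B be a minimizer of x ↦ g(x̂, x) over B, i.e. g(x̂, x*) ≤ g(x̂, x) for all x ∈ B. Then for every z₀ ∈ ℝ^d and every x ∈ B, g(x*, z₀) ≤ g(x̂, z₀) + g(z₀, x); in particular g(x*, z₀) ≤ g(x̂, z₀) + min_{x ∈ B} g(z₀, x). -/

import Mathlib

open Matrix

/-- projection lemma, general part. For a PSD matrix `A`, a closed convex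
set `B`, `g u v = (u - v)ᵀ A (u - v)`, and `x*` a minimizer of `g x̂ ·` over `B`,
for every `z₀ ∈ ℝ^d` and every `x ∈ B`, `g x* z₀ ≤ g x̂ z₀ + g z₀ x`; in particular
`g x* z₀ ≤ g x̂ z₀ + inf_{x ∈ B} g z₀ x`. -/
theorem projection_lemma_general {d : ℕ} (A : Matrix (Fin d) (Fin d) ℝ) (hA : A.PosSemidef)
    (B : Set (Fin d → ℝ)) (hBclosed : IsClosed B) (hBconvex : Convex ℝ B)
    (g : (Fin d → ℝ) → (Fin d → ℝ) → ℝ)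
    (hg : ∀ u v, g u v = (u - v) ⬝ᵥ A.mulVec (u - v))
    (xhat : Fin d → ℝ) (xstar : Fin d → ℝ) (hxstar : xstar ∈ B)
    (hmin : ∀ x ∈ B, g xhat xstar ≤ g xhat x) :
    (∀ z₀ : Fin d → ℝ, ∀ x ∈ B, g xstar z₀ ≤ g xhat z₀ + g z₀ x) ∧
    (∀ z₀ : Fin d → ℝ, g xstar z₀ ≤ g xhat z₀ + sInf ((fun x => g z₀ x) '' B)) := by
  have hQnn : ∀ u : Fin d → ℝ, 0 ≤ u ⬝ᵥ A.mulVec u := fun u => by simpa using hA.dotProduct_mulVec_nonneg u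
  have hsymm : ∀ u v : Fin d → ℝ, u ⬝ᵥ A.mulVec v = v ⬝ᵥ A.mulVec u := by
    intro u v
    have hT : Aᵀ = A := by simpa using (isHermitian_iff_isSymm.mp hA.1).eq
    rw [Matrix.dotProduct_mulVec, ← Matrix.mulVec_transpose, hT, dotProduct_comm]
  -- variational inequality
  have hVI : ∀ x ∈ B, (xhat - xstar) ⬝ᵥ A.mulVec (x - xstar) ≤ 0 := by
    intro x hx
    by_contra hc
    push_neg at hc
    set c := (xhat - xstar) ⬝ᵥ A.mulVec (x - xstar) with hcdef
    set p := (x - xstar) ⬝ᵥ A.mulVec (x - xstar) with hpdef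
    have hp0 : 0 ≤ p := hQnn _
    -- choose t
    have key : ∀ t : ℝ, 0 ≤ t → t ≤ 1 → 0 ≤ -2 * t * c + t ^ 2 * p := by
      intro t ht0 ht1
      have hmem : (1 - t) • xstar + t • x ∈ B := hBconvex hxstar hx (by linarith) ht0 (by ring)
      have h1 := hmin _ hmem
      have hexp : xhat - ((1 - t) • xstar + t • x) = (xhat - xstar) - t • (x - xstar) := by
        funext i
        simp [Pi.smul_apply, smul_eq_mul]
        ring
      rw [hg, hg, hexp] at h1
      have h2 : ((xhat - xstar) - t • (x - xstar)) ⬝ᵥ A.mulVec ((xhat - xstar) - t • (x - xstar))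
          = (xhat - xstar) ⬝ᵥ A.mulVec (xhat - xstar) - 2 * t * c + t ^ 2 * p := by
        simp only [sub_dotProduct, dotProduct_sub, Matrix.mulVec_sub,
          smul_dotProduct, dotProduct_smul, Matrix.mulVec_smul, smul_eq_mul,
          hcdef, hpdef]
        rw [hsymm xstar xhat, hsymm x xhat, hsymm x xstar]
        ring
      rw [h2] at h1
      linarith
    rcases eq_or_lt_of_le hp0 with hp | hp
    · have := key 1 zero_le_one le_rfl
      rw [← hp] at this
      linarith
    · set t : ℝ := min 1 (c / p) with htdef
      have ht0 : 0 < t := lt_min one_pos (div_pos hc hp)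
      have ht1 : t ≤ 1 := min_le_left _ _
      have htp : t * p ≤ c := by
        have : t ≤ c / p := min_le_right _ _
        calc t * p ≤ (c / p) * p := by nlinarith
        _ = c := by field_simp
      have := key t ht0.le ht1
      nlinarith
  have main : ∀ z₀ : Fin d → ℝ, ∀ x ∈ B, g xstar z₀ ≤ g xhat z₀ + g z₀ x := by
    intro z₀ x hx
    have hvi := hVI x hx
    have hnn : 0 ≤ ((z₀ - x) - (xhat - xstar)) ⬝ᵥ A.mulVec ((z₀ - x) - (xhat - xstar)) := hQnn _
    -- identity:  g x̂ z₀ + g z₀ x - g x* z₀ = Q(w-h, w-h) + 2 Q(x*-x, h) where the VI bounds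
    have hid : g xhat z₀ + g z₀ x - g xstar z₀ =
        ((z₀ - x) - (xhat - xstar)) ⬝ᵥ A.mulVec ((z₀ - x) - (xhat - xstar))
          - 2 * ((xhat - xstar) ⬝ᵥ A.mulVec (x - xstar)) := by
      rw [hg, hg, hg]
      simp only [sub_dotProduct, dotProduct_sub, Matrix.mulVec_sub]
      rw [hsymm xstar xhat, hsymm z₀ xhat, hsymm z₀ xstar, hsymm x xhat, hsymm x xstar,
        hsymm x z₀]
      ring
    linarith
  refine ⟨main, fun z₀ => ?_⟩
  have hle : g xstar z₀ - g xhat z₀ ≤ sInf ((fun x => g z₀ x) '' B) := by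
    refine le_csInf ⟨_, Set.mem_image_of_mem _ hxstar⟩ ?_
    rintro b ⟨x, hx, rfl⟩
    have := main z₀ x hx
    linarith
  linarith
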